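/- In characteristic 3, the system of equations in (c₁,c₂) ∈ k²: c₁³ + c₂h₁ − c₁h₂ = 0 and c₂³ + c₂h₃ − c₁h₄ = 0, where h₁ = −a₄, h₂ = a₃, h₃ = −a₁, h₄ = 1 (the coefficients of g₃(x) = x⁴ − a₁x³ + a₃x − a₄ in degrees 0, 1, 3, 4), has exactly 9 solutions over an algebraically closed field k if and only if a₄ − a₁a₃ ≠ 0. -/

import Mathlib

open Polynomial

/-- Characteristic-3 `p`-rank computation: over an algebraically closed field of
characteristic 3, the system `c₁³ + c₂h₁ − c₁h₂ = 0`, `c₂³ + c₂h₃ − c₁h₄ = 0` with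
`h₁ = −a₄`, `h₂ = a₃`, `h₃ = −a₁`, `h₄ = 1` has exactly 9 solutions iff
`a₄ − a₁a₃ ≠ 0`. -/
theorem char_three_prank_count {k : Type*} [Field k] [IsAlgClosed k] [CharP k 3]
    (a₁ a₃ a₄ : k) :
    {c : k × k | c.1 ^ 3 + c.2 * (-a₄) - c.1 * a₃ = 0 ∧
        c.2 ^ 3 + c.2 * (-a₁) - c.1 * 1 = 0}.ncard = 9 ↔ a₄ - a₁ * a₃ ≠ 0 := by
  classical
  have h3 : (3 : k) = 0 := CharP.cast_eq_zero k 3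
  have h9 : (9 : k) = 0 := by linear_combination 3 * h3
  have hinj : Function.Injective (fun y : k => (y ^ 3 - a₁ * y, y)) := by
    intro a b h
    exact congrArg Prod.snd h
  have hS : {c : k × k | c.1 ^ 3 + c.2 * (-a₄) - c.1 * a₃ = 0 ∧
        c.2 ^ 3 + c.2 * (-a₁) - c.1 * 1 = 0}
      = (fun y : k => (y ^ 3 - a₁ * y, y)) ''
        {y : k | y ^ 9 - (a₁ ^ 3 + a₃) * y ^ 3 + (a₁ * a₃ - a₄) * y = 0} := by
    ext ⟨c₁, c₂⟩
    simp only [Set.mem_setOf_eq, Set.mem_image, Prod.mk.injEq]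
    constructor
    · rintro ⟨h1, h2⟩
      have hc1 : c₁ = c₂ ^ 3 - a₁ * c₂ := by linear_combination -h2
      subst hc1
      refine ⟨c₂, ?_, rfl, rfl⟩
      linear_combination h1 + (a₁ * c₂ ^ 7 - a₁ ^ 2 * c₂ ^ 5) * h3
    · rintro ⟨y, hy, h1, rfl⟩
      subst h1
      constructor
      · linear_combination hy - (a₁ * y ^ 7 - a₁ ^ 2 * y ^ 5) * h3
      · ring
  rw [hS, Set.ncard_image_of_injective _ hinj]
  constructor
  · intro hcard
    by_contra hz
    obtain ⟨c, hc⟩ := IsAlgClosed.exists_pow_nat_eq (a₁ ^ 3 + a₃) (n := 3) (by norm_num)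
    have hQdeg : (X ^ 3 - C c * X : k[X]).natDegree = 3 := by
      compute_degree!
    have hQ : (X ^ 3 - C c * X : k[X]) ≠ 0 := by
      intro h
      rw [h] at hQdeg
      simp at hQdeg
    have hset : {y : k | y ^ 9 - (a₁ ^ 3 + a₃) * y ^ 3 + (a₁ * a₃ - a₄) * y = 0}
        = (↑((X ^ 3 - C c * X : k[X]).roots.toFinset) : Set k) := by
      ext y
      rw [Set.mem_setOf_eq, Finset.mem_coe, Multiset.mem_toFinset, mem_roots hQ,
        IsRoot.def]
      simp only [eval_sub, eval_mul, eval_pow, eval_C, eval_X]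
      constructor
      · intro h
        have h27 : (y ^ 3 - c * y) ^ 3 = 0 := by
          linear_combination h + y * hz + (c ^ 2 * y ^ 5 - c * y ^ 7) * h3
            - y ^ 3 * hc
        exact pow_eq_zero_iff (n := 3) (by norm_num) |>.mp h27
      · intro h
        have h27 : (y ^ 3 - c * y) ^ 3 = 0 := by rw [h]; ring
        linear_combination h27 - y * hz - (c ^ 2 * y ^ 5 - c * y ^ 7) * h3
          + y ^ 3 * hc
    rw [hset, Set.ncard_coe_finset] at hcard
    have hle : ((X ^ 3 - C c * X : k[X]).roots.toFinset).card ≤ 3 := by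
      refine le_trans (Multiset.toFinset_card_le _) ?_
      refine le_trans (Polynomial.card_roots' _) ?_
      rw [hQdeg]
    omega
  · intro hz
    have hz' : a₁ * a₃ - a₄ ≠ 0 := fun h => hz (by linear_combination -h)
    set P : k[X] := X ^ 9 - C (a₁ ^ 3 + a₃) * X ^ 3 + C (a₁ * a₃ - a₄) * X with hP
    have hdeg : P.natDegree = 9 := by
      rw [hP]
      compute_degree!
    have hPne : P ≠ 0 := by
      intro h
      rw [h] at hdeg
      simp at hdeg
    have hderiv : derivative P = C (a₁ * a₃ - a₄) := by
      rw [hP]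
      simp [derivative_X_pow, derivative_pow, h3, h9]
    have hsep : P.Separable := by
      refine ⟨0, C (a₁ * a₃ - a₄)⁻¹, ?_⟩
      rw [hderiv, zero_mul, zero_add, ← C_mul, inv_mul_cancel₀ hz', C_1]
    have hsplits : P.Splits := IsAlgClosed.splits P
    have hset : {y : k | y ^ 9 - (a₁ ^ 3 + a₃) * y ^ 3 + (a₁ * a₃ - a₄) * y = 0}
        = (↑(P.roots.toFinset) : Set k) := by
      ext y
      rw [Set.mem_setOf_eq, Finset.mem_coe, Multiset.mem_toFinset, mem_roots hPne,
        IsRoot.def, hP]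
      simp only [eval_add, eval_sub, eval_mul, eval_pow, eval_C, eval_X]
    rw [hset, Set.ncard_coe_finset,
      Multiset.toFinset_card_of_nodup (nodup_roots hsep)]
    rw [← hdeg]
    exact (splits_iff_card_roots).mp hsplits
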